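/- Generation lemma for sums: if Γ ⊢ t + r : S, then there exist types T and R such that S ≡ T + R, Γ ⊢ t : T, and Γ ⊢ r : R. -/

import Mathlib

/- Types of λvec_R: general types and unit types (mutual) -/
mutual
inductive UTy (S : Type) : Type where
  | uvar : ℕ → UTy S
  | arrow : UTy S → Ty S → UTy S
  | fallU : ℕ → UTy S → UTy S
  | fallG : ℕ → UTy S → UTy S
inductive Ty (S : Type) : Type where
  | unit : UTy S → Ty S
  | smul : S → Ty S → Ty S
  | add : Ty S → Ty S → Ty S
  | gvar : ℕ → Ty S
end

/- Type equivalence: the smallest congruence with the weak-module axioms -/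
mutual
inductive UEquiv {S : Type} [CommRing S] : UTy S → UTy S → Prop where
  | refl (U : UTy S) : UEquiv U U
  | symm : UEquiv U V → UEquiv V U
  | trans : UEquiv U V → UEquiv V W → UEquiv U W
  | arrow : UEquiv U V → TEquiv T R → UEquiv (.arrow U T) (.arrow V R)
  | fallU : UEquiv U V → UEquiv (.fallU X U) (.fallU X V)
  | fallG : UEquiv U V → UEquiv (.fallG X U) (.fallG X V)
inductive TEquiv {S : Type} [CommRing S] : Ty S → Ty S → Prop where
  | refl (T : Ty S) : TEquiv T T
  | symm : TEquiv T R → TEquiv R T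
  | trans : TEquiv T R → TEquiv R P → TEquiv T P
  | unit : UEquiv U V → TEquiv (.unit U) (.unit V)
  | smul : TEquiv T R → TEquiv (.smul a T) (.smul a R)
  | addL : TEquiv T R → TEquiv (.add T P) (.add R P)
  | addR : TEquiv T R → TEquiv (.add P T) (.add P R)
  | one_smul (T : Ty S) : TEquiv (.smul 1 T) T
  | smul_smul : TEquiv (.smul a (.smul b T)) (.smul (a*b) T)
  | smul_add : TEquiv (.add (.smul a T) (.smul a R)) (.smul a (.add T R))
  | add_smul : TEquiv (.add (.smul a T) (.smul b T)) (.smul (a+b) T)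
  | comm : TEquiv (.add T R) (.add R T)
  | assoc : TEquiv (.add T (.add R P)) (.add (.add T R) P)
end

/- substitution of a unit type variable by a unit type -/
mutual
def UTy.substU {S : Type} : UTy S → ℕ → UTy S → UTy S
  | .uvar m, X, A => if m = X then A else .uvar m
  | .arrow U T, X, A => .arrow (U.substU X A) (T.substU X A)
  | .fallU m U, X, A => if m = X then .fallU m U else .fallU m (U.substU X A)
  | .fallG m U, X, A => .fallG m (U.substU X A)
def Ty.substU {S : Type} : Ty S → ℕ → UTy S → Ty S
  | .unit U, X, A => .unit (U.substU X A)
  | .smul a T, X, A => .smul a (T.substU X A)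
  | .add T R, X, A => .add (T.substU X A) (R.substU X A)
  | .gvar m, _, _ => .gvar m
end

/- substitution of a general type variable by a general type -/
mutual
def UTy.substG {S : Type} : UTy S → ℕ → Ty S → UTy S
  | .uvar m, _, _ => .uvar m
  | .arrow U T, X, A => .arrow (U.substG X A) (T.substG X A)
  | .fallU m U, X, A => .fallU m (U.substG X A)
  | .fallG m U, X, A => if m = X then .fallG m U else .fallG m (U.substG X A)
def Ty.substG {S : Type} : Ty S → ℕ → Ty S → Ty S
  | .unit U, X, A => .unit (U.substG X A)
  | .smul a T, X, A => .smul a (T.substG X A)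
  | .add T R, X, A => .add (T.substG X A) (R.substG X A)
  | .gvar m, X, A => if m = X then A else .gvar m
end

/- free type variables; a variable is (false, n) for a unit variable X_n
   and (true, n) for a general variable 𝕏_n -/
mutual
def UTy.fv {S : Type} : UTy S → Set (Bool × ℕ)
  | .uvar n => {(false, n)}
  | .arrow U T => U.fv ∪ T.fv
  | .fallU n U => U.fv \ {(false, n)}
  | .fallG n U => U.fv \ {(true, n)}
def Ty.fv {S : Type} : Ty S → Set (Bool × ℕ)
  | .unit U => U.fv
  | .smul _ T => T.fv
  | .add T R => T.fv ∪ R.fv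
  | .gvar n => {(true, n)}
end
/- a single substitution item: a type variable together with a type of the matching kind -/
inductive TSub (S : Type) : Type where
  | u : ℕ → UTy S → TSub S
  | g : ℕ → Ty S → TSub S

def TSub.var {S : Type} : TSub S → Bool × ℕ
  | .u X _ => (false, X)
  | .g X _ => (true, X)

def Ty.applySub {S : Type} : Ty S → TSub S → Ty S
  | T, .u X A => T.substU X A
  | T, .g X A => T.substG X A

def UTy.applySub {S : Type} : UTy S → TSub S → UTy S
  | U, .u X A => U.substU X A
  | U, .g X A => U.substG X A

def Ty.applySubs {S : Type} (T : Ty S) (σ : List (TSub S)) : Ty S := σ.foldl Ty.applySub T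
def UTy.applySubs {S : Type} (U : UTy S) (σ : List (TSub S)) : UTy S := σ.foldl UTy.applySub U

/- ∀X.U for a variable of either kind, and iterated foralls -/
def mkForall {S : Type} (X : Bool × ℕ) (U : UTy S) : UTy S :=
  if X.1 then .fallG X.2 U else .fallU X.2 U
def mkForalls {S : Type} (Xs : List (Bool × ℕ)) (U : UTy S) : UTy S := Xs.foldr mkForall U

/- the linear combination Σᵢ αᵢ·Tᵢ represented by a (nonempty) list of pairs -/
def combo {S : Type} : List (S × Ty S) → Ty S
  | [] => .gvar 0
  | [p] => .smul p.1 p.2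
  | p :: q :: L => .add (.smul p.1 p.2) (combo (q :: L))

/- sum of the scalars of a linear combination -/
def weightOf {S : Type} [CommRing S] {α : Type} (L : List (S × α)) : S := (L.map Prod.fst).sum

/- Terms of λvec_R -/
inductive Term (S : Type) : Type where
  | var : ℕ → Term S
  | lam : ℕ → Term S → Term S
  | app : Term S → Term S → Term S
  | smul : S → Term S → Term S
  | add : Term S → Term S → Term S

/- basis terms: variables and abstractions -/
inductive IsBasis {S : Type} : Term S → Prop where
  | var : IsBasis (.var x)
  | lam : IsBasis (.lam x t)

def Term.fv {S : Type} : Term S → Set ℕ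
  | .var x => {x}
  | .lam x t => t.fv \ {x}
  | .app t r => t.fv ∪ r.fv
  | .smul _ t => t.fv
  | .add t r => t.fv ∪ r.fv

/- term substitution t[b/x] -/
def Term.subst {S : Type} : Term S → ℕ → Term S → Term S
  | .var y, x, b => if y = x then b else .var y
  | .lam y t, x, b => if y = x then .lam y t else .lam y (t.subst x b)
  | .app t r, x, b => .app (t.subst x b) (r.subst x b)
  | .smul a t, x, b => .smul a (t.subst x b)
  | .add t r, x, b => .add (t.subst x b) (r.subst x b)

/- typing contexts: partial maps from term variables to unit types -/
def Ctx (S : Type) : Type := ℕ → Option (UTy S)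

def Ctx.update {S : Type} (Γ : Ctx S) (x : ℕ) (U : UTy S) : Ctx S :=
  fun y => if y = x then some U else Γ y

def Ctx.fv {S : Type} (Γ : Ctx S) : Set (Bool × ℕ) :=
  {v | ∃ x U, Γ x = some U ∧ v ∈ UTy.fv U}

def Ctx.applySub {S : Type} (Γ : Ctx S) (s : TSub S) : Ctx S :=
  fun x => (Γ x).map (fun U => U.applySub s)
/- Sized typing judgement: `TypesN n Γ t T` means Γ ⊢ t : T has a derivation
   with n sequents. -/
inductive TypesN {S : Type} [CommRing S] : ℕ → Ctx S → Term S → Ty S → Prop where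
  | ax : Γ x = some U → TypesN 1 Γ (.var x) (.unit U)
  | equiv : TypesN n Γ t T → TEquiv T R → TypesN (n+1) Γ t R
  | arrI : TypesN n (Γ.update x U) t T → TypesN (n+1) Γ (.lam x t) (.unit (.arrow U T))
  | arrE (Xs : List (Bool × ℕ)) (U : UTy S) (L : List (S × Ty S)) (M : List (S × List (TSub S))) :
      L ≠ [] → M ≠ [] →
      (∀ q ∈ M, q.2.map TSub.var = Xs) →
      TypesN n Γ t (combo (L.map fun p => (p.1, Ty.unit (mkForalls Xs (.arrow U p.2))))) →
      TypesN m Γ r (combo (M.map fun q => (q.1, (Ty.unit U).applySubs q.2))) →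
      TypesN (n+m+1) Γ (.app t r)
        (combo (L.flatMap fun p => M.map fun q => (p.1 * q.1, p.2.applySubs q.2)))
  | fallI (L : List (S × UTy S)) (X : Bool × ℕ) :
      L ≠ [] → X ∉ Γ.fv →
      TypesN n Γ t (combo (L.map fun p => (p.1, Ty.unit p.2))) →
      TypesN (n+1) Γ t (combo (L.map fun p => (p.1, Ty.unit (mkForall X p.2))))
  | fallE (L : List (S × UTy S)) (s : TSub S) :
      L ≠ [] →
      TypesN n Γ t (combo (L.map fun p => (p.1, Ty.unit (mkForall s.var p.2)))) →
      TypesN (n+1) Γ t (combo (L.map fun p => (p.1, (Ty.unit p.2).applySub s)))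
  | addI : TypesN n Γ t T → TypesN m Γ r R → TypesN (n+m+1) Γ (.add t r) (.add T R)
  | oneE : TypesN n Γ (.smul 1 t) T → TypesN (n+1) Γ t T
  | sum (L : List (ℕ × S × Ty S)) :
      L ≠ [] →
      (∀ p ∈ L, TypesN p.1 Γ t p.2.2) →
      TypesN ((L.map Prod.fst).sum + 1) Γ (.smul (weightOf (L.map Prod.snd)) t)
        (combo (L.map Prod.snd))

/- the typing judgement Γ ⊢ t : T -/
def Types {S : Type} [CommRing S] (Γ : Ctx S) (t : Term S) (T : Ty S) : Prop :=
  ∃ n, TypesN n Γ t T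

/- the relation ≺_{X,Γ} -/
inductive Prec {S : Type} [CommRing S] (Γ : Ctx S) : (Bool × ℕ) → Ty S → Ty S → Prop where
  | intro (X : Bool × ℕ) (L : List (S × UTy S)) :
      X ∉ Γ.fv → L ≠ [] →
      TEquiv R (combo (L.map fun p => (p.1, Ty.unit p.2))) →
      TEquiv T (combo (L.map fun p => (p.1, Ty.unit (mkForall X p.2)))) →
      Prec Γ X R T
  | elim (s : TSub S) (L : List (S × UTy S)) :
      s.var ∉ Γ.fv → L ≠ [] →
      TEquiv R (combo (L.map fun p => (p.1, Ty.unit (mkForall s.var p.2)))) →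
      TEquiv T (combo (L.map fun p => (p.1, (Ty.unit p.2).applySub s))) →
      Prec Γ s.var R T

/- the relation ⪯_{𝒱,Γ} -/
inductive Preceq {S : Type} [CommRing S] (Γ : Ctx S) : Set (Bool × ℕ) → Ty S → Ty S → Prop where
  | prec : V ∩ Γ.fv = ∅ → Prec Γ X R T → Preceq Γ (V ∪ {X}) R T
  | trans : Preceq Γ V₁ A B → Preceq Γ V₂ B C → Preceq Γ (V₁ ∪ V₂) A C
  | equiv : V ∩ Γ.fv = ∅ → TEquiv R T → Preceq Γ V R T

/- the reduction relation → -/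
inductive Step {S : Type} [CommRing S] : Term S → Term S → Prop where
  -- Group E
  | oneSmul : Step (.smul 1 t) t
  | smulSmul : Step (.smul a (.smul b t)) (.smul (a*b) t)
  | smulAdd : Step (.smul a (.add t r)) (.add (.smul a t) (.smul a r))
  -- Group F
  | factor : Step (.add (.smul a t) (.smul b t)) (.smul (a+b) t)
  | factorOne : Step (.add (.smul a t) t) (.smul (a+1) t)
  | factorNone : Step (.add t t) (.smul (1+1) t)
  -- Group B
  | beta : IsBasis b → Step (.app (.lam x t) b) (t.subst x b)
  -- Group A
  | appAddL : Step (.app (.add t r) u) (.add (.app t u) (.app r u))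
  | appAddR : Step (.app t (.add r u)) (.add (.app t r) (.app t u))
  | appSmulL : Step (.app (.smul a t) r) (.smul a (.app t r))
  | appSmulR : Step (.app t (.smul a r)) (.smul a (.app t r))
  -- contextual rules
  | ctxSmul : Step t r → Step (.smul a t) (.smul a r)
  | ctxAddR : Step t r → Step (.add u t) (.add u r)
  | ctxAppR : Step t r → Step (.app u t) (.app u r)
  | ctxAppL : Step t r → Step (.app t u) (.app r u)
  | ctxLam : Step t r → Step (.lam x t) (.lam x r)

/- values: sums (in any association) of pairwise-distinct abstractions, possibly scaled -/
inductive SumOf {S : Type} : Term S → List (Term S) → Prop where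
  | leaf (t : Term S) : SumOf t [t]
  | add : SumOf t L → SumOf r M → SumOf (.add t r) (L ++ M)

inductive VEntry {S : Type} : Term S → Prop where
  | lam : VEntry (.lam x t)
  | smul : VEntry (.smul a (.lam x t))

def lamOf {S : Type} : Term S → Term S
  | .smul _ b => b
  | b => b

def IsValue {S : Type} (t : Term S) : Prop :=
  ∃ L : List (Term S), SumOf t L ∧ (∀ e ∈ L, VEntry e) ∧ (L.map lamOf).Pairwise (· ≠ ·)

/- weight of types and of terms -/
def Ty.weight {S : Type} [CommRing S] : Ty S → S
  | .unit _ => 1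
  | .gvar _ => 1
  | .smul a T => a * T.weight
  | .add T R => T.weight + R.weight

def Term.weight {S : Type} [CommRing S] : Term S → S
  | .var _ => 1
  | .lam _ _ => 1
  | .app _ _ => 1
  | .smul a t => a * t.weight
  | .add t r => t.weight + r.weight
section GenSums
variable {S : Type} [CommRing S]

theorem TEquiv.addc {a b c d : Ty S} (h1 : TEquiv a b) (h2 : TEquiv c d) :
    TEquiv (a.add c) (b.add d) := (TEquiv.addL h1).trans (TEquiv.addR h2)

theorem TEquiv.medial (a b c d : Ty S) :
    TEquiv ((a.add b).add (c.add d)) ((a.add c).add (b.add d)) := by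
  have h1 : TEquiv (Ty.add b (c.add d)) (Ty.add c (b.add d)) :=
    (TEquiv.assoc).trans ((TEquiv.addL TEquiv.comm).trans (TEquiv.assoc).symm)
  exact (TEquiv.assoc).symm.trans ((TEquiv.addR h1).trans TEquiv.assoc)

theorem combo_append (L M : List (S × Ty S)) (hL : L ≠ []) (hM : M ≠ []) :
    TEquiv (combo (L ++ M)) ((combo L).add (combo M)) := by
  induction L with
  | nil => simp at hL
  | cons p L ih =>
    cases L with
    | nil =>
      cases M with
      | nil => simp at hM
      | cons q M => exact TEquiv.refl _
    | cons q L' =>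
      have h := ih (by simp)
      show TEquiv (Ty.add (Ty.smul p.1 p.2) (combo (q :: (L' ++ M)))) _
      exact (TEquiv.addR h).trans TEquiv.assoc

theorem combo_scale (a : S) (L : List (S × Ty S)) (hL : L ≠ []) :
    TEquiv (Ty.smul a (combo L)) (combo (L.map fun p => (a * p.1, p.2))) := by
  induction L with
  | nil => simp at hL
  | cons p L ih =>
    cases L with
    | nil => exact TEquiv.smul_smul
    | cons q L' =>
      have h := ih (by simp)
      exact (TEquiv.smul_add).symm.trans (TEquiv.addc TEquiv.smul_smul h)

theorem combo_congr {α : Type} (l : List α) (f g : α → S × Ty S)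
    (h : ∀ x ∈ l, (f x).1 = (g x).1 ∧ TEquiv (f x).2 (g x).2) :
    TEquiv (combo (l.map f)) (combo (l.map g)) := by
  induction l with
  | nil => exact TEquiv.refl _
  | cons x l ih =>
    have hx := h x (by simp)
    have hs : TEquiv (Ty.smul (f x).1 (f x).2) (Ty.smul (g x).1 (g x).2) := by
      rw [hx.1]; exact TEquiv.smul hx.2
    cases l with
    | nil => exact hs
    | cons y l' =>
      have := ih (fun z hz => h z (by simp [hz]))
      exact TEquiv.addc hs this

theorem combo_add_split {α : Type} (l : List α) (hl : l ≠ []) (f : α → S) (T R : α → Ty S) :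
    TEquiv (combo (l.map fun x => (f x, (T x).add (R x))))
      ((combo (l.map fun x => (f x, T x))).add (combo (l.map fun x => (f x, R x)))) := by
  induction l with
  | nil => simp at hl
  | cons x l ih =>
    cases l with
    | nil => exact TEquiv.smul_add.symm
    | cons y l' =>
      have h := ih (by simp)
      exact (TEquiv.addc TEquiv.smul_add.symm h).trans (TEquiv.medial _ _ _ _)

theorem canon : ∀ T : Ty S, ∃ L : List (S × Ty S), L ≠ [] ∧ TEquiv T (combo L) ∧
    ∀ p ∈ L, (∃ U, p.2 = Ty.unit U) ∨ ∃ n, p.2 = Ty.gvar n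
  | .unit U => ⟨[(1, Ty.unit U)], by simp, (TEquiv.one_smul _).symm, by simp⟩
  | .gvar n => ⟨[(1, Ty.gvar n)], by simp, (TEquiv.one_smul _).symm, by simp⟩
  | .smul a T => by
    obtain ⟨L, hne, he, hs⟩ := canon T
    refine ⟨L.map fun p => (a * p.1, p.2), by simpa using hne,
      (TEquiv.smul he).trans (combo_scale a L hne), ?_⟩
    intro p hp
    obtain ⟨q, hq, rfl⟩ := List.mem_map.1 hp
    exact hs q hq
  | .add T R => by
    obtain ⟨L, hLne, hL, hLs⟩ := canon T
    obtain ⟨M, hMne, hM, hMs⟩ := canon R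
    refine ⟨L ++ M, by simp [hLne], (TEquiv.addc hL hM).trans (combo_append L M hLne hMne).symm, ?_⟩
    intro p hp
    rcases List.mem_append.1 hp with h | h
    · exact hLs p h
    · exact hMs p h

end GenSums
section GenSums2
variable {S : Type} [CommRing S]

theorem uequiv_substU {U V : UTy S} (h : UEquiv U V) (X : ℕ) (A : UTy S) :
    UEquiv (U.substU X A) (V.substU X A) := by
  refine UEquiv.rec (motive_1 := fun U V _ => ∀ X A, UEquiv (U.substU X A) (V.substU X A))
    (motive_2 := fun T R _ => ∀ X A, TEquiv (T.substU X A) (R.substU X A))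
    ?_ ?_ ?_ ?_ ?_ ?_ ?_ ?_ ?_ ?_ ?_ ?_ ?_ ?_ ?_ ?_ ?_ ?_ ?_ h X A
  · exact fun U X A => .refl _
  · intro U V a ih X A; exact (ih X A).symm
  · intro U V W a b ih1 ih2 X A; exact (ih1 X A).trans (ih2 X A)
  · intro U V T R a b ih1 ih2 X A
    simp only [UTy.substU]; exact .arrow (ih1 X A) (ih2 X A)
  · intro U V m a ih X A
    simp only [UTy.substU]
    by_cases hm : m = X
    · simp only [if_pos hm]; exact .fallU a
    · simp only [if_neg hm]; exact .fallU (ih X A)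
  · intro U V m a ih X A
    simp only [UTy.substU]; exact .fallG (ih X A)
  · exact fun T X A => .refl _
  · intro T R a ih X A; exact (ih X A).symm
  · intro T R P a b ih1 ih2 X A; exact (ih1 X A).trans (ih2 X A)
  · intro U V a ih X A; simp only [Ty.substU]; exact .unit (ih X A)
  · intro T R a b ih X A; simp only [Ty.substU]; exact .smul (ih X A)
  · intro T R P a ih X A; simp only [Ty.substU]; exact .addL (ih X A)
  · intro T R P a ih X A; simp only [Ty.substU]; exact .addR (ih X A)
  · intro T X A; simp only [Ty.substU]; exact .one_smul _
  · intro a b T X A; simp only [Ty.substU]; exact .smul_smul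
  · intro a T R X A; simp only [Ty.substU]; exact .smul_add
  · intro a T b X A; simp only [Ty.substU]; exact .add_smul
  · intro T R X A; simp only [Ty.substU]; exact .comm
  · intro T R P X A; simp only [Ty.substU]; exact .assoc

theorem uequiv_substG {U V : UTy S} (h : UEquiv U V) (X : ℕ) (A : Ty S) :
    UEquiv (U.substG X A) (V.substG X A) := by
  refine UEquiv.rec (motive_1 := fun U V _ => ∀ X A, UEquiv (U.substG X A) (V.substG X A))
    (motive_2 := fun T R _ => ∀ X A, TEquiv (T.substG X A) (R.substG X A))
    ?_ ?_ ?_ ?_ ?_ ?_ ?_ ?_ ?_ ?_ ?_ ?_ ?_ ?_ ?_ ?_ ?_ ?_ ?_ h X A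
  · exact fun U X A => .refl _
  · intro U V a ih X A; exact (ih X A).symm
  · intro U V W a b ih1 ih2 X A; exact (ih1 X A).trans (ih2 X A)
  · intro U V T R a b ih1 ih2 X A
    simp only [UTy.substG]; exact .arrow (ih1 X A) (ih2 X A)
  · intro U V m a ih X A
    simp only [UTy.substG]; exact .fallU (ih X A)
  · intro U V m a ih X A
    simp only [UTy.substG]
    by_cases hm : m = X
    · simp only [if_pos hm]; exact .fallG a
    · simp only [if_neg hm]; exact .fallG (ih X A)
  · exact fun T X A => .refl _
  · intro T R a ih X A; exact (ih X A).symm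
  · intro T R P a b ih1 ih2 X A; exact (ih1 X A).trans (ih2 X A)
  · intro U V a ih X A; simp only [Ty.substG]; exact .unit (ih X A)
  · intro T R a b ih X A; simp only [Ty.substG]; exact .smul (ih X A)
  · intro T R P a ih X A; simp only [Ty.substG]; exact .addL (ih X A)
  · intro T R P a ih X A; simp only [Ty.substG]; exact .addR (ih X A)
  · intro T X A; simp only [Ty.substG]; exact .one_smul _
  · intro a b T X A; simp only [Ty.substG]; exact .smul_smul
  · intro a T R X A; simp only [Ty.substG]; exact .smul_add
  · intro a T b X A; simp only [Ty.substG]; exact .add_smul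
  · intro T R X A; simp only [Ty.substG]; exact .comm
  · intro T R P X A; simp only [Ty.substG]; exact .assoc

/-- head constructor information of a unit type -/
def headIdx {S : Type} : UTy S → Option (Bool × ℕ)
  | .fallU m _ => some (false, m)
  | .fallG m _ => some (true, m)
  | _ => none

theorem uequiv_headIdx {U V : UTy S} (h : UEquiv U V) : headIdx U = headIdx V := by
  refine UEquiv.rec (motive_1 := fun U V _ => headIdx U = headIdx V)
    (motive_2 := fun _ _ _ => True)
    ?_ ?_ ?_ ?_ ?_ ?_ ?_ ?_ ?_ ?_ ?_ ?_ ?_ ?_ ?_ ?_ ?_ ?_ ?_ h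
  · intro U; rfl
  · intro U V a ih; exact ih.symm
  · intro U V W a b ih1 ih2; exact ih1.trans ih2
  · intro U V T R a b ih1 ih2; rfl
  · intro U V m a ih; rfl
  · intro U V m a ih; rfl
  all_goals intros; trivial

theorem headIdx_mkForall (X : Bool × ℕ) (U : UTy S) : headIdx (mkForall X U) = some X := by
  obtain ⟨b, m⟩ := X; cases b <;> simp [mkForall, headIdx]

theorem headIdx_eq_some {U : UTy S} {X : Bool × ℕ} (h : headIdx U = some X) :
    ∃ W, U = mkForall X W := by
  cases U with
  | fallU m W => simp [headIdx] at h; exact ⟨W, by simp [mkForall, ← h]⟩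
  | fallG m W => simp [headIdx] at h; exact ⟨W, by simp [mkForall, ← h]⟩
  | uvar n => simp [headIdx] at h
  | arrow U T => simp [headIdx] at h

end GenSums2
set_option linter.unusedSectionVars false
section GenSums3
variable {S : Type} [CommRing S]

/-- strip a matching quantifier and substitute -/
def gmap {S : Type} : TSub S → UTy S → UTy S
  | .u X A, .fallU m V => if m = X then V.substU X A else .fallU m V
  | .u _ _, U => U
  | .g X A, .fallG m V => if m = X then V.substG X A else .fallG m V
  | .g _ _, U => U

theorem gmap_uequiv (s : TSub S) {U V : UTy S} (h : UEquiv U V) :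
    UEquiv (gmap s U) (gmap s V) := by
  refine UEquiv.rec (motive_1 := fun U V _ => UEquiv (gmap s U) (gmap s V))
    (motive_2 := fun _ _ _ => True)
    ?_ ?_ ?_ ?_ ?_ ?_ ?_ ?_ ?_ ?_ ?_ ?_ ?_ ?_ ?_ ?_ ?_ ?_ ?_ h
  · exact fun U => .refl _
  · intro U V a ih; exact ih.symm
  · intro U V W a b ih1 ih2; exact ih1.trans ih2
  · intro U V T R a b ih1 ih2
    cases s <;> simp only [gmap] <;> exact .arrow a b
  · intro U V m a ih
    cases s with
    | u X A =>
      simp only [gmap]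
      by_cases hm : m = X
      · simp only [if_pos hm]; exact uequiv_substU a X A
      · simp only [if_neg hm]; exact .fallU a
    | g X A => simp only [gmap]; exact .fallU a
  · intro U V m a ih
    cases s with
    | u X A => simp only [gmap]; exact .fallG a
    | g X A =>
      simp only [gmap]
      by_cases hm : m = X
      · simp only [if_pos hm]; exact uequiv_substG a X A
      · simp only [if_neg hm]; exact .fallG a
  all_goals intros; trivial

theorem mkForall_uequiv (X : Bool × ℕ) {U V : UTy S} (h : UEquiv U V) :
    UEquiv (mkForall X U) (mkForall X V) := by
  obtain ⟨b, m⟩ := X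
  cases b <;> simp only [mkForall] <;> [exact .fallU h; exact .fallG h]

/-- lift a map on unit types to general types -/
def liftT {S : Type} (g : UTy S → UTy S) : Ty S → Ty S
  | .unit U => .unit (g U)
  | .gvar n => .gvar n
  | .smul a T => .smul a (liftT g T)
  | .add T R => .add (liftT g T) (liftT g R)

theorem liftT_equiv (g : UTy S → UTy S) (hg : ∀ {U V : UTy S}, UEquiv U V → UEquiv (g U) (g V))
    {T R : Ty S} (h : TEquiv T R) : TEquiv (liftT g T) (liftT g R) := by
  refine TEquiv.rec (motive_1 := fun U V _ => UEquiv (g U) (g V))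
    (motive_2 := fun T R _ => TEquiv (liftT g T) (liftT g R))
    ?_ ?_ ?_ ?_ ?_ ?_ ?_ ?_ ?_ ?_ ?_ ?_ ?_ ?_ ?_ ?_ ?_ ?_ ?_ h
  · exact fun U => hg (.refl U)
  · intro U V a ih; exact ih.symm
  · intro U V W a b ih1 ih2; exact ih1.trans ih2
  · intro U V T R a b ih1 ih2; exact hg (.arrow a b)
  · intro U V m a ih; exact hg (.fallU a)
  · intro U V m a ih; exact hg (.fallG a)
  · exact fun T => .refl _
  · intro T R a ih; exact ih.symm
  · intro T R P a b ih1 ih2; exact ih1.trans ih2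
  · intro U V a ih; exact .unit ih
  · intro T R a b ih; exact .smul ih
  · intro T R P a ih; exact .addL ih
  · intro T R P a ih; exact .addR ih
  · intro T; exact .one_smul _
  · intro a b T; exact .smul_smul
  · intro a T R; exact .smul_add
  · intro a T b; exact .add_smul
  · intro T R; exact .comm
  · intro T R P; exact .assoc

theorem liftT_combo (g : UTy S → UTy S) :
    ∀ L : List (S × Ty S), liftT g (combo L) = combo (L.map fun p => (p.1, liftT g p.2))
  | [] => rfl
  | [p] => rfl
  | p :: q :: L => by
    show Ty.add _ (liftT g (combo (q :: L))) = _
    rw [liftT_combo g (q :: L)]; rfl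

/-- all atoms of a type satisfy a predicate -/
def AllAtoms {S : Type} (Q : Ty S → Prop) : Ty S → Prop
  | .unit U => Q (.unit U)
  | .gvar n => Q (.gvar n)
  | .smul _ T => AllAtoms Q T
  | .add T R => AllAtoms Q T ∧ AllAtoms Q R

theorem allAtoms_equiv {Q : Ty S → Prop}
    (hQ : ∀ {U V : UTy S}, UEquiv U V → (Q (.unit U) ↔ Q (.unit V)))
    {T R : Ty S} (h : TEquiv T R) : AllAtoms Q T ↔ AllAtoms Q R := by
  refine TEquiv.rec (motive_1 := fun U V _ => Q (.unit U) ↔ Q (.unit V))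
    (motive_2 := fun T R _ => AllAtoms Q T ↔ AllAtoms Q R)
    ?_ ?_ ?_ ?_ ?_ ?_ ?_ ?_ ?_ ?_ ?_ ?_ ?_ ?_ ?_ ?_ ?_ ?_ ?_ h
  · exact fun U => Iff.rfl
  · intro U V a ih; exact ih.symm
  · intro U V W a b ih1 ih2; exact ih1.trans ih2
  · intro U V T R a b ih1 ih2; exact hQ (.arrow a b)
  · intro U V m a ih; exact hQ (.fallU a)
  · intro U V m a ih; exact hQ (.fallG a)
  · exact fun T => Iff.rfl
  · intro T R a ih; exact ih.symm
  · intro T R P a b ih1 ih2; exact ih1.trans ih2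
  · intro U V a ih; exact ih
  · intro T R a b ih; exact ih
  · intro T R P a ih; simp only [AllAtoms]; rw [ih]
  · intro T R P a ih; simp only [AllAtoms]; rw [ih]
  · intro T; exact Iff.rfl
  · intro a b T; exact Iff.rfl
  · intro a T R; simp only [AllAtoms]
  · intro a T b; simp only [AllAtoms]; tauto
  · intro T R; simp only [AllAtoms]; tauto
  · intro T R P; simp only [AllAtoms]; tauto

theorem allAtoms_combo_mem {Q : Ty S → Prop} :
    ∀ {L : List (S × Ty S)}, AllAtoms Q (combo L) → ∀ p ∈ L, AllAtoms Q p.2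
  | [], _, p, hp => by simp at hp
  | [q], h, p, hp => by
    simp at hp; subst hp; exact h
  | q :: q' :: L, h, p, hp => by
    obtain ⟨h1, h2⟩ := h
    rcases List.mem_cons.1 hp with rfl | hp'
    · exact h1
    · exact allAtoms_combo_mem h2 p hp'

theorem allAtoms_combo_of {Q : Ty S → Prop} :
    ∀ {L : List (S × Ty S)}, L ≠ [] → (∀ p ∈ L, AllAtoms Q p.2) → AllAtoms Q (combo L)
  | [], h, _ => absurd rfl h
  | [q], _, h => h q (by simp)
  | q :: q' :: L, _, h =>
    ⟨h q (by simp), allAtoms_combo_of (by simp) fun p hp => h p (List.mem_cons_of_mem q hp)⟩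

/-- projection to the unit type of an atom -/
def pickU {S : Type} : Ty S → UTy S
  | .unit U => U
  | _ => .uvar 0

theorem extract_units {Q : Ty S → Prop}
    (hQ : ∀ {U V : UTy S}, UEquiv U V → (Q (.unit U) ↔ Q (.unit V)))
    (hfa : ∀ A, Q A → ∃ U, A = Ty.unit U) {T : Ty S} (hT : AllAtoms Q T) :
    ∃ L : List (S × UTy S), L ≠ [] ∧ (∀ p ∈ L, Q (.unit p.2)) ∧
      TEquiv T (combo (L.map fun p => (p.1, Ty.unit p.2))) := by
  obtain ⟨L0, hne, hTe, hsh⟩ := canon T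
  have hA : AllAtoms Q (combo L0) := (allAtoms_equiv hQ hTe).1 hT
  have hall' : ∀ p ∈ L0, AllAtoms Q p.2 := allAtoms_combo_mem hA
  have hall : ∀ p ∈ L0, Q p.2 := by
    intro p hp
    rcases hsh p hp with ⟨U, hU⟩ | ⟨n, hn⟩
    · rw [hU]; have := hall' p hp; rwa [hU] at this
    · rw [hn]; have := hall' p hp; rwa [hn] at this
  have hshape : ∀ p ∈ L0, p.2 = Ty.unit (pickU p.2) := by
    intro p hp
    obtain ⟨U, hU⟩ := hfa p.2 (hall p hp)
    rw [hU]; rfl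
  refine ⟨L0.map fun p => (p.1, pickU p.2), by simpa using hne, ?_, ?_⟩
  · intro q hq
    obtain ⟨p, hp, rfl⟩ := List.mem_map.1 hq
    simpa [← hshape p hp] using hall p hp
  · rw [List.map_map]
    have : L0.map ((fun p : S × UTy S => (p.1, Ty.unit p.2)) ∘ fun p : S × Ty S => (p.1, pickU p.2)) = L0.map id := by
      refine List.map_congr_left ?_
      intro p hp
      simp only [Function.comp, id]
      rw [← hshape p hp]
    rw [this, List.map_id]; exact hTe

end GenSums3
section GenSums4
variable {S : Type} [CommRing S]

theorem Types.equiv' {Γ : Ctx S} {t : Term S} {T R : Ty S} (h : Types Γ t T)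
    (e : TEquiv T R) : Types Γ t R := by
  obtain ⟨n, hn⟩ := h; exact ⟨n + 1, .equiv hn e⟩

theorem types_combo {Γ : Ctx S} {t : Term S} (L : List (S × Ty S)) (hne : L ≠ [])
    (hw : weightOf L = 1) (h : ∀ p ∈ L, Types Γ t p.2) : Types Γ t (combo L) := by
  classical
  let sz : S × Ty S → ℕ := fun p => if hp : Types Γ t p.2 then hp.choose else 0
  have key : ∀ p ∈ L, TypesN (sz p) Γ t p.2 := by
    intro p hp
    have hT := h p hp
    simp only [sz]; rw [dif_pos hT]; exact hT.choose_spec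
  have hs := TypesN.sum (Γ := Γ) (t := t) (L.map fun p => (sz p, p)) (by simpa using hne)
    (by
      intro q hq
      obtain ⟨p, hp, rfl⟩ := List.mem_map.1 hq
      exact key p hp)
  simp only [List.map_map] at hs
  have hid : (Prod.snd ∘ fun p : S × Ty S => (sz p, p)) = id := rfl
  rw [hid, List.map_id] at hs
  rw [hw] at hs
  exact ⟨_, TypesN.oneE hs⟩

theorem gen_lift {Γ : Ctx S} {t : Term S} {T : Ty S} (g : UTy S → UTy S) (Q : Ty S → Prop)
    (hQ : ∀ {U V : UTy S}, UEquiv U V → (Q (.unit U) ↔ Q (.unit V)))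
    (hg : ∀ {U V : UTy S}, UEquiv U V → UEquiv (g U) (g V))
    (hfa : ∀ A, Q A → ∃ U, A = Ty.unit U)
    (hT : AllAtoms Q T)
    (hrule : ∀ L : List (S × UTy S), L ≠ [] → (∀ p ∈ L, Q (.unit p.2)) →
      Types Γ t (combo (L.map fun p => (p.1, Ty.unit p.2))) →
      Types Γ t (combo (L.map fun p => (p.1, Ty.unit (g p.2)))))
    (ht : Types Γ t T) :
    ∃ T', TEquiv (liftT g T) T' ∧ Types Γ t T' := by
  obtain ⟨L, hne, hQL, hTe⟩ := extract_units hQ hfa hT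
  refine ⟨combo (L.map fun p => (p.1, Ty.unit (g p.2))), ?_, hrule L hne hQL (ht.equiv' hTe)⟩
  have h1 := liftT_equiv g hg hTe
  rw [liftT_combo, List.map_map] at h1
  exact h1

end GenSums4
/-- strip a top quantifier -/
def stripF {S : Type} : UTy S → UTy S
  | .fallU _ V => V
  | .fallG _ V => V
  | U => U

theorem stripF_mkForall {S : Type} (X : Bool × ℕ) (W : UTy S) : stripF (mkForall X W) = W := by
  obtain ⟨b, m⟩ := X; cases b <;> simp [mkForall, stripF]

theorem gmap_mkForall {S : Type} (s : TSub S) (V : UTy S) :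
    Ty.unit (gmap s (mkForall s.var V)) = (Ty.unit V).applySub s := by
  cases s <;> simp [gmap, mkForall, TSub.var, Ty.applySub, Ty.substU, Ty.substG]

theorem Qiff {S : Type} [CommRing S] (X : Bool × ℕ) (U : UTy S) :
    (∃ W, Ty.unit U = Ty.unit (mkForall X W)) ↔ headIdx U = some X := by
  constructor
  · rintro ⟨W, hW⟩
    have hU : U = mkForall X W := by injection hW
    rw [hU, headIdx_mkForall]
  · intro h
    obtain ⟨W, rfl⟩ := headIdx_eq_some h
    exact ⟨W, rfl⟩

inductive WAdd {S : Type} [CommRing S] (t r : Term S) : Term S → Prop where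
  | base : WAdd t r (.add t r)
  | step : WAdd t r u → WAdd t r (.smul 1 u)

section GenSums5
variable {S : Type} [CommRing S]

theorem gen_aux : ∀ n : ℕ, ∀ (Γ : Ctx S) (u : Term S) (P : Ty S) (t r : Term S),
    TypesN n Γ u P → WAdd t r u →
    ∃ T R : Ty S, TEquiv P (.add T R) ∧ Types Γ t T ∧ Types Γ r R := by
  intro n
  induction n using Nat.strong_induction_on with
  | _ n IH =>
  intro Γ u P t r h hw
  cases h with
  | ax hx => cases hw
  | equiv h' e =>
    obtain ⟨T, R, he, ht, hr⟩ := IH _ (Nat.lt_succ_self _) Γ u _ t r h' hw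
    exact ⟨T, R, e.symm.trans he, ht, hr⟩
  | arrI h' => cases hw
  | arrE Xs U L M hL hM hXs h1 h2 => cases hw
  | addI h1 h2 =>
    cases hw with
    | base => exact ⟨_, _, .refl _, ⟨_, h1⟩, ⟨_, h2⟩⟩
  | oneE h' =>
    exact IH _ (Nat.lt_succ_self _) Γ _ P t r h' hw.step
  | fallI L X hLne hXΓ h' =>
    obtain ⟨T, R, hC, ht, hr⟩ := IH _ (Nat.lt_succ_self _) Γ u _ t r h' hw
    have hQ : ∀ {U V : UTy S}, UEquiv U V →
        ((∃ W, Ty.unit U = Ty.unit W) ↔ (∃ W, Ty.unit V = Ty.unit W)) :=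
      fun _ => ⟨fun _ => ⟨_, rfl⟩, fun _ => ⟨_, rfl⟩⟩
    have hCatoms : AllAtoms (fun A => ∃ W, A = Ty.unit W)
        (combo (L.map fun p => (p.1, Ty.unit p.2))) := by
      refine allAtoms_combo_of (by simpa using hLne) ?_
      intro q hq
      obtain ⟨p, hp, rfl⟩ := List.mem_map.1 hq
      exact ⟨p.2, rfl⟩
    have hTR := (allAtoms_equiv hQ hC).1 hCatoms
    obtain ⟨T', hT', htT'⟩ := gen_lift (mkForall X) _ hQ (mkForall_uequiv X) (fun A hA => hA) hTR.1
      (fun L' hne' _ hty => by obtain ⟨m, d⟩ := hty; exact ⟨m+1, TypesN.fallI L' X hne' hXΓ d⟩) ht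
    obtain ⟨R', hR', hrR'⟩ := gen_lift (mkForall X) _ hQ (mkForall_uequiv X) (fun A hA => hA) hTR.2
      (fun L' hne' _ hty => by obtain ⟨m, d⟩ := hty; exact ⟨m+1, TypesN.fallI L' X hne' hXΓ d⟩) hr
    refine ⟨T', R', ?_, htT', hrR'⟩
    have h2 := liftT_equiv (mkForall X) (mkForall_uequiv X) hC
    have hPC : liftT (mkForall X) (combo (L.map fun p => (p.1, Ty.unit p.2)))
        = combo (L.map fun p => (p.1, Ty.unit (mkForall X p.2))) := by
      rw [liftT_combo, List.map_map]; rfl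
    rw [hPC] at h2
    exact h2.trans (TEquiv.addc hT' hR')
  | fallE L s hLne h' =>
    obtain ⟨T, R, hC, ht, hr⟩ := IH _ (Nat.lt_succ_self _) Γ u _ t r h' hw
    have hQ : ∀ {U V : UTy S}, UEquiv U V →
        ((∃ W, Ty.unit U = Ty.unit (mkForall s.var W)) ↔
         (∃ W, Ty.unit V = Ty.unit (mkForall s.var W))) := by
      intro U V hUV
      rw [Qiff, Qiff, uequiv_headIdx hUV]
    have hCatoms : AllAtoms (fun A => ∃ W, A = Ty.unit (mkForall s.var W))
        (combo (L.map fun p => (p.1, Ty.unit (mkForall s.var p.2)))) := by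
      refine allAtoms_combo_of (by simpa using hLne) ?_
      intro q hq
      obtain ⟨p, hp, rfl⟩ := List.mem_map.1 hq
      exact ⟨p.2, rfl⟩
    have hTR := (allAtoms_equiv hQ hC).1 hCatoms
    have hrule : ∀ (w : Term S) (L' : List (S × UTy S)), L' ≠ [] →
        (∀ p ∈ L', ∃ W, Ty.unit p.2 = Ty.unit (mkForall s.var W)) →
        Types Γ w (combo (L'.map fun p => (p.1, Ty.unit p.2))) →
        Types Γ w (combo (L'.map fun p => (p.1, Ty.unit (gmap s p.2)))) := by
      intro w L' hne' hQ' hty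
      obtain ⟨m, d⟩ := hty
      have hsh : ∀ p ∈ L', p.2 = mkForall s.var (stripF p.2) := by
        intro p hp
        obtain ⟨W, hW⟩ := hQ' p hp
        have hU : p.2 = mkForall s.var W := by injection hW
        rw [hU, stripF_mkForall]
      have heq1 : L'.map (fun p => (p.1, Ty.unit p.2))
          = (L'.map fun p => (p.1, stripF p.2)).map (fun q => (q.1, Ty.unit (mkForall s.var q.2))) := by
        rw [List.map_map]
        refine List.map_congr_left fun p hp => ?_
        simp only [Function.comp]
        rw [← hsh p hp]
      rw [heq1] at d
      have d2 := TypesN.fallE (Γ := Γ) (t := w) (L'.map fun p => (p.1, stripF p.2)) s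
        (by simpa using hne') d
      have heq2 : (L'.map fun p => (p.1, stripF p.2)).map (fun q => (q.1, (Ty.unit q.2).applySub s))
          = L'.map (fun p => (p.1, Ty.unit (gmap s p.2))) := by
        rw [List.map_map]
        refine List.map_congr_left fun p hp => ?_
        simp only [Function.comp]
        rw [← gmap_mkForall, ← hsh p hp]
      rw [heq2] at d2
      exact ⟨_, d2⟩
    obtain ⟨T', hT', htT'⟩ := gen_lift (gmap s) _ hQ (gmap_uequiv s)
      (fun A hA => by obtain ⟨W, hW⟩ := hA; exact ⟨_, hW⟩) hTR.1 (hrule t) ht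
    obtain ⟨R', hR', hrR'⟩ := gen_lift (gmap s) _ hQ (gmap_uequiv s)
      (fun A hA => by obtain ⟨W, hW⟩ := hA; exact ⟨_, hW⟩) hTR.2 (hrule r) hr
    refine ⟨T', R', ?_, htT', hrR'⟩
    have h2 := liftT_equiv (gmap s) (gmap_uequiv s) hC
    have hPC : liftT (gmap s) (combo (L.map fun p => (p.1, Ty.unit (mkForall s.var p.2))))
        = combo (L.map fun p => (p.1, (Ty.unit p.2).applySub s)) := by
      rw [liftT_combo, List.map_map]
      congr 1
      refine List.map_congr_left fun p hp => ?_
      simp only [Function.comp]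
      show (p.1, Ty.unit (gmap s (mkForall s.var p.2))) = _
      rw [gmap_mkForall]
    rw [hPC] at h2
    exact h2.trans (TEquiv.addc hT' hR')
  | sum L hLne hmem =>
    classical
    rename_i t'
    generalize hWe : weightOf (List.map Prod.snd L) = W at hw
    cases hw with
    | step hw' =>
    let D : ℕ × S × Ty S → Ty S × Ty S := fun p =>
      if hp : ∃ TR : Ty S × Ty S, TEquiv p.2.2 (Ty.add TR.1 TR.2) ∧ Types Γ t TR.1 ∧ Types Γ r TR.2
      then hp.choose else (Ty.gvar 0, Ty.gvar 0)
    have hD : ∀ p ∈ L, TEquiv p.2.2 ((D p).1.add (D p).2) ∧ Types Γ t (D p).1 ∧ Types Γ r (D p).2 := by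
      intro p hp
      have hlt : p.1 < (L.map Prod.fst).sum + 1 :=
        Nat.lt_succ_of_le (List.single_le_sum (fun _ _ => Nat.zero_le _) _
          (List.mem_map_of_mem (f := Prod.fst) hp))
      obtain ⟨T, R, he, htt, hrr⟩ := IH p.1 hlt Γ _ p.2.2 t r (hmem p hp) hw'
      have hex : ∃ TR : Ty S × Ty S, TEquiv p.2.2 (Ty.add TR.1 TR.2) ∧ Types Γ t TR.1 ∧ Types Γ r TR.2 :=
        ⟨(T, R), he, htt, hrr⟩
      simp only [D]; rw [dif_pos hex]; exact hex.choose_spec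
    refine ⟨combo (L.map fun p => (p.2.1, (D p).1)), combo (L.map fun p => (p.2.1, (D p).2)), ?_, ?_, ?_⟩
    · have e1 : TEquiv (combo (L.map Prod.snd))
          (combo (L.map fun p => (p.2.1, Ty.add (D p).1 (D p).2))) :=
        combo_congr L _ _ (fun p _hp => ⟨rfl, (hD p _hp).1⟩)
      exact e1.trans (combo_add_split L hLne _ _ _)
    · refine types_combo _ (by simpa using hLne) ?_ ?_
      · have hwe : weightOf (L.map fun p => (p.2.1, (D p).1)) = weightOf (List.map Prod.snd L) := by
          simp only [weightOf, List.map_map]; rfl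
        rw [hwe, hWe]
      · intro q hq
        obtain ⟨p, hp, rfl⟩ := List.mem_map.1 hq
        exact (hD p hp).2.1
    · refine types_combo _ (by simpa using hLne) ?_ ?_
      · have hwe : weightOf (L.map fun p => (p.2.1, (D p).2)) = weightOf (List.map Prod.snd L) := by
          simp only [weightOf, List.map_map]; rfl
        rw [hwe, hWe]
      · intro q hq
        obtain ⟨p, hp, rfl⟩ := List.mem_map.1 hq
        exact (hD p hp).2.2

end GenSums5
/- STATEMENT 8: Generation lemma for sums -/
theorem generation_sums {S : Type} [CommRing S]
    (Γ : Ctx S) (t r : Term S) (P : Ty S)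
    (h : Types Γ (.add t r) P) :
    ∃ T R : Ty S, TEquiv P (.add T R) ∧ Types Γ t T ∧ Types Γ r R := by
  obtain ⟨n, hn⟩ := h
  exact gen_aux n Γ _ P t r hn WAdd.base
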